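/- Under the Basic Assumption, suppose σ^ν, θ^ν → ∞, ε^ν → 0, θ^ν·|τ^ν − τ| → 0, there exists an optimal solution (x*, y*) of (P) such that the value function V is calm at x*, and for each ν, (x^ν, y^ν, u^ν, α^ν, λ^ν) is an ε^ν-optimal solution of (P)^ν. Suppose along a subsequence N ⊂ ℕ one has (x^ν, y^ν, u^ν, α^ν) → (x̂, ŷ, û, α̂) and V is locally calm at x̂. If θ^ν λ̄^ν · sup_{y∈Y} dist₂(y, Y^ν) → 0 and there are constants κ_g, κ_H ∈ [0,∞) with |g(x,y) − g(x,y')| ≤ κ_g ‖y − y'‖₂ and ‖H(x,y) − H(x,y')‖ ≤ κ_H ‖y − y'‖₂ for all x ∈ X and y, y' ∈ Y, then (x̂, ŷ) is an optimal solution of (P) and 𝔪^ν → 𝔪 along N, with 𝔪 a real number. -/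

import Mathlib

open Filter Topology Metric Set

attribute [local instance] Classical.propDecidable

noncomputable section

/-- `ℝ^n` with the Euclidean norm. -/
abbrev Rn (n : ℕ) : Type := EuclideanSpace ℝ (Fin n)

variable {n m : ℕ} {Q : Type*} [NormedAddCommGroup Q]

/-- `(x, y)` is feasible in the bilevel problem (P): `x ∈ X` and
`y ∈ τ-argmin_{z ∈ Y} { g(x,z) | H(x,z) ∈ D }`. -/
def PFeas (X : Set (Rn n)) (Y : Set (Rn m)) (D : Set Q)
    (g : Rn n × Rn m → ℝ) (H : Rn n × Rn m → Q) (τ : ℝ)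
    (x : Rn n) (y : Rn m) : Prop :=
  x ∈ X ∧ y ∈ Y ∧ H (x, y) ∈ D ∧
    ∀ z ∈ Y, H (x, z) ∈ D → g (x, y) ≤ g (x, z) + τ

/-- The minimum value `𝔪` of (P). -/
def PVal (X : Set (Rn n)) (Y : Set (Rn m)) (D : Set Q)
    (f : Rn n × Rn m → EReal) (g : Rn n × Rn m → ℝ) (H : Rn n × Rn m → Q)
    (τ : ℝ) : EReal :=
  ⨅ (x : Rn n) (y : Rn m) (_ : PFeas X Y D g H τ x y), f (x, y)

/-- Optimal solution of (P): feasible, finite objective value attaining `𝔪`. -/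
def POpt (X : Set (Rn n)) (Y : Set (Rn m)) (D : Set Q)
    (f : Rn n × Rn m → EReal) (g : Rn n × Rn m → ℝ) (H : Rn n × Rn m → Q)
    (τ : ℝ) (x : Rn n) (y : Rn m) : Prop :=
  PFeas X Y D g H τ x y ∧ f (x, y) ≠ ⊤ ∧ f (x, y) = PVal X Y D f g H τ

/-- Feasibility in the alternative problem (P)^ν with data `Yn, gn, Hn, lamBar, τn`. -/
def PnuFeas (X : Set (Rn n)) (Y : Set (Rn m)) (D : Set Q) (Yn : Set (Rn m))
    (gn : Rn n × Rn m → ℝ) (Hn : Rn n × Rn m → Q) (lamBar τn : ℝ)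
    (x : Rn n) (y : Rn m) (u : Q) (α lam : ℝ) : Prop :=
  x ∈ X ∧ y ∈ Y ∧ α ≤ 0 ∧ 0 ≤ lam ∧ lam ≤ lamBar ∧ Hn (x, y) + u ∈ D ∧
    ∀ z ∈ Yn, gn (x, y) + α ≤ gn (x, z) + lam * infDist (Hn (x, z)) D + τn

/-- Objective function of (P)^ν: `f^ν(x,y) + σ^ν ‖u‖ - θ^ν α`. -/
def PnuObj (fn : Rn n × Rn m → EReal) (σn θn : ℝ)
    (x : Rn n) (y : Rn m) (u : Q) (α : ℝ) : EReal :=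
  fn (x, y) + ((σn * ‖u‖ - θn * α : ℝ) : EReal)

/-- The minimum value `𝔪^ν` of (P)^ν. -/
def PnuVal (X : Set (Rn n)) (Y : Set (Rn m)) (D : Set Q) (Yn : Set (Rn m))
    (fn : Rn n × Rn m → EReal) (gn : Rn n × Rn m → ℝ) (Hn : Rn n × Rn m → Q)
    (σn θn lamBar τn : ℝ) : EReal :=
  ⨅ (x : Rn n) (y : Rn m) (u : Q) (α : ℝ) (lam : ℝ)
    (_ : PnuFeas X Y D Yn gn Hn lamBar τn x y u α lam),
    PnuObj fn σn θn x y u α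

/-- `ε`-optimal solution of (P)^ν: feasible with finite objective value at most `𝔪^ν + ε`. -/
def PnuEps (X : Set (Rn n)) (Y : Set (Rn m)) (D : Set Q) (Yn : Set (Rn m))
    (fn : Rn n × Rn m → EReal) (gn : Rn n × Rn m → ℝ) (Hn : Rn n × Rn m → Q)
    (σn θn lamBar τn ε : ℝ)
    (x : Rn n) (y : Rn m) (u : Q) (α lam : ℝ) : Prop :=
  PnuFeas X Y D Yn gn Hn lamBar τn x y u α lam ∧
    PnuObj fn σn θn x y u α ≠ ⊤ ∧
    PnuObj fn σn θn x y u α ≤ PnuVal X Y D Yn fn gn Hn σn θn lamBar τn + (ε : EReal)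

/-- The value function `V(x,u) = inf_{y ∈ Y} { g(x,y) | H(x,y) + u ∈ D }`. -/
def Vfun (Y : Set (Rn m)) (D : Set Q)
    (g : Rn n × Rn m → ℝ) (H : Rn n × Rn m → Q)
    (x : Rn n) (u : Q) : EReal :=
  ⨅ (y : Rn m) (_ : y ∈ Y ∧ H (x, y) + u ∈ D), (g (x, y) : EReal)

/-- The value function `V` is calm at `x` with penalty threshold `lam`. -/
def CalmAtWith (Y : Set (Rn m)) (D : Set Q)
    (g : Rn n × Rn m → ℝ) (H : Rn n × Rn m → Q)
    (x : Rn n) (lam : ℝ) : Prop :=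
  0 ≤ lam ∧ ∀ u : Q,
    Vfun Y D g H x 0 - ((lam * ‖u‖ : ℝ) : EReal) ≤ Vfun Y D g H x u

/-- The value function `V` is calm at `x`. -/
def CalmAt (Y : Set (Rn m)) (D : Set Q)
    (g : Rn n × Rn m → ℝ) (H : Rn n × Rn m → Q) (x : Rn n) : Prop :=
  ∃ lam : ℝ, CalmAtWith Y D g H x lam

/-- The value function `V` is locally calm at `xbar`. -/
def LocallyCalmAt (Y : Set (Rn m)) (D : Set Q)
    (g : Rn n × Rn m → ℝ) (H : Rn n × Rn m → Q) (xbar : Rn n) : Prop :=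
  ∃ lam ρ : ℝ, 0 ≤ lam ∧ 0 < ρ ∧
    ∀ x ∈ Metric.closedBall xbar ρ, ∀ u : Q,
      Vfun Y D g H x 0 - ((lam * ‖u‖ : ℝ) : EReal) ≤ Vfun Y D g H x u

/-- The penalty-based value function `μ(x,λ) = inf_{y ∈ S} [g(x,y) + λ dist(H(x,y), D)]`. -/
def muSet (S : Set (Rn m)) (D : Set Q)
    (g : Rn n × Rn m → ℝ) (H : Rn n × Rn m → Q)
    (x : Rn n) (lam : ℝ) : EReal :=
  ⨅ (y : Rn m) (_ : y ∈ S), ((g (x, y) + lam * infDist (H (x, y)) D : ℝ) : EReal)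

/-- The Basic Assumption (Assumption 2.1). -/
structure BasicAssumption (X : Set (Rn n)) (Y : Set (Rn m)) (D : Set Q)
    (Yν : ℕ → Set (Rn m))
    (f : Rn n × Rn m → EReal) (fν : ℕ → Rn n × Rn m → EReal)
    (g : Rn n × Rn m → ℝ) (gν : ℕ → Rn n × Rn m → ℝ)
    (H : Rn n × Rn m → Q) (Hν : ℕ → Rn n × Rn m → Q)
    (σ θ lamBar τν δ η : ℕ → ℝ) : Prop where
  X_nonempty : X.Nonempty
  X_closed : IsClosed X
  Y_nonempty : Y.Nonempty
  Y_closed : IsClosed Y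
  D_nonempty : D.Nonempty
  D_closed : IsClosed D
  Yν_nonempty : ∀ ν, (Yν ν).Nonempty
  Yν_subset : ∀ ν, Yν ν ⊆ Y
  Yν_conv : ∀ y : Rn m,
    Tendsto (fun ν => infDist y (Yν ν)) atTop (𝓝 (infDist y Y))
  δ_lim : Tendsto δ atTop (𝓝 0)
  g_err : ∀ ν, ∀ x ∈ X, ∀ y ∈ Y, |gν ν (x, y) - g (x, y)| ≤ δ ν
  g_cont : ContinuousOn g (X ×ˢ Y)
  η_lim : Tendsto η atTop (𝓝 0)
  H_err : ∀ ν, ∀ x ∈ X, ∀ y ∈ Y,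
    |infDist (Hν ν (x, y)) D - infDist (H (x, y)) D| ≤ η ν
  H_cont : ContinuousOn H (X ×ˢ Y)
  f_ne_bot : ∀ p, f p ≠ ⊥
  fν_ne_bot : ∀ ν p, fν ν p ≠ ⊥
  f_limsup : ∀ x ∈ X, ∀ y ∈ Y,
    limsup (fun ν => fν ν (x, y)) atTop ≤ f (x, y)
  f_liminf : ∀ x ∈ X, ∀ y ∈ Y, ∀ (xs : ℕ → Rn n) (ys : ℕ → Rn m),
    (∀ ν, xs ν ∈ X) → (∀ ν, ys ν ∈ Y) →
    Tendsto xs atTop (𝓝 x) → Tendsto ys atTop (𝓝 y) →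
    f (x, y) ≤ liminf (fun ν => fν ν (xs ν, ys ν)) atTop
  σ_nonneg : ∀ ν, 0 ≤ σ ν
  θ_nonneg : ∀ ν, 0 ≤ θ ν
  lamBar_nonneg : ∀ ν, 0 ≤ lamBar ν
  τν_nonneg : ∀ ν, 0 ≤ τν ν
  lamBar_top : Tendsto lamBar atTop atTop
  ση_lim : Tendsto (fun ν => σ ν * η ν) atTop (𝓝 0)
  θlamη_lim : Tendsto (fun ν => θ ν * lamBar ν * η ν) atTop (𝓝 0)
  θδ_lim : Tendsto (fun ν => θ ν * δ ν) atTop (𝓝 0)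


section Helpers

variable {X : Set (Rn n)} {Y : Set (Rn m)} {D : Set Q}

lemma exists_add_mem_infDist [NormedSpace ℝ Q] [FiniteDimensional ℝ Q]
    (hD : IsClosed D) (hne : D.Nonempty) (a : Q) :
    ∃ u : Q, a + u ∈ D ∧ ‖u‖ = infDist a D := by
  obtain ⟨d, hd, hdist⟩ := hD.exists_infDist_eq_dist hne a
  refine ⟨d - a, by simpa using hd, ?_⟩
  rw [hdist, dist_eq_norm, norm_sub_rev]

lemma ereal_le_add_coe_of_sub {a b : EReal} {c : ℝ} (h : a - (c : EReal) ≤ b) :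
    a ≤ b + (c : EReal) := by
  induction a using EReal.rec with
  | bot => simp
  | top =>
    induction b using EReal.rec with
    | bot => simp [EReal.top_sub_coe] at h
    | top => simp
    | coe b => simp [EReal.top_sub_coe, ← EReal.coe_add] at h
  | coe a =>
    induction b using EReal.rec with
    | bot => simp [← EReal.coe_sub] at h
    | top => simp
    | coe b =>
      rw [← EReal.coe_sub] at h
      rw [← EReal.coe_add]
      exact_mod_cast by linarith [EReal.coe_le_coe_iff.1 h]

lemma ereal_coe_sub_le_of_le_add {a : EReal} {c e : ℝ}
    (h : (c : EReal) ≤ a + (e : EReal)) : ((c - e : ℝ) : EReal) ≤ a := by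
  induction a using EReal.rec with
  | bot => simp at h
  | top => simp
  | coe a =>
    rw [← EReal.coe_add] at h
    exact_mod_cast by linarith [EReal.coe_le_coe_iff.1 h]

lemma Vfun_le {g : Rn n × Rn m → ℝ} {H : Rn n × Rn m → Q} {x : Rn n} {u : Q}
    {y : Rn m} (hy : y ∈ Y) (hH : H (x, y) + u ∈ D) :
    Vfun Y D g H x u ≤ (g (x, y) : EReal) :=
  iInf_le_of_le y (iInf_le_of_le ⟨hy, hH⟩ le_rfl)

lemma le_Vfun {g : Rn n × Rn m → ℝ} {H : Rn n × Rn m → Q} {x : Rn n} {u : Q}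
    {c : EReal} (h : ∀ y ∈ Y, H (x, y) + u ∈ D → c ≤ (g (x, y) : EReal)) :
    c ≤ Vfun Y D g H x u :=
  le_iInf fun y => le_iInf fun hy => h y hy.1 hy.2

lemma exists_of_Vfun_lt {g : Rn n × Rn m → ℝ} {H : Rn n × Rn m → Q} {x : Rn n}
    {u : Q} {c : ℝ} (h : Vfun Y D g H x u < (c : EReal)) :
    ∃ y ∈ Y, H (x, y) + u ∈ D ∧ g (x, y) < c := by
  rw [Vfun, iInf_lt_iff] at h
  obtain ⟨y, hy⟩ := h
  rw [iInf_lt_iff] at hy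
  obtain ⟨⟨hyY, hyH⟩, hlt⟩ := hy
  exact ⟨y, hyY, hyH, EReal.coe_lt_coe_iff.1 hlt⟩

lemma PnuVal_le_PnuObj {Yn : Set (Rn m)} {fn : Rn n × Rn m → EReal}
    {gn : Rn n × Rn m → ℝ} {Hn : Rn n × Rn m → Q} {σn θn lamBar τn : ℝ}
    {x : Rn n} {y : Rn m} {u : Q} {α lam : ℝ}
    (h : PnuFeas X Y D Yn gn Hn lamBar τn x y u α lam) :
    PnuVal X Y D Yn fn gn Hn σn θn lamBar τn ≤ PnuObj fn σn θn x y u α :=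
  iInf_le_of_le x <| iInf_le_of_le y <| iInf_le_of_le u <| iInf_le_of_le α <|
    iInf_le_of_le lam <| iInf_le_of_le h le_rfl

lemma PVal_le {f : Rn n × Rn m → EReal} {g : Rn n × Rn m → ℝ}
    {H : Rn n × Rn m → Q} {τ : ℝ} {x : Rn n} {y : Rn m}
    (h : PFeas X Y D g H τ x y) :
    PVal X Y D f g H τ ≤ f (x, y) :=
  iInf_le_of_le x <| iInf_le_of_le y <| iInf_le_of_le h le_rfl

lemma calm_add {g : Rn n × Rn m → ℝ} {H : Rn n × Rn m → Q} {x : Rn n} {lam : ℝ}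
    (h : ∀ u : Q, Vfun Y D g H x 0 - ((lam * ‖u‖ : ℝ) : EReal) ≤ Vfun Y D g H x u)
    (u : Q) :
    Vfun Y D g H x 0 ≤ Vfun Y D g H x u + ((lam * ‖u‖ : ℝ) : EReal) :=
  ereal_le_add_coe_of_sub (h u)

lemma patch_tendsto {E : Type*} [PseudoMetricSpace E] {φ : ℕ → ℕ} (hφ : StrictMono φ)
    (v : ℕ → E) (a : E) (h : Tendsto (fun k => v (φ k)) atTop (𝓝 a)) :
    Tendsto (fun ν => if ν ∈ Set.range φ then v ν else a) atTop (𝓝 a) := by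
  rw [Metric.tendsto_atTop] at h ⊢
  intro e he
  obtain ⟨K, hK⟩ := h e he
  refine ⟨φ K, fun ν hν => ?_⟩
  by_cases hmem : ν ∈ Set.range φ
  · obtain ⟨k, rfl⟩ := hmem
    simpa [Set.mem_range_self] using hK k (hφ.le_iff_le.1 hν)
  · simpa [hmem] using he

end Helpers

/-- Theorem 2.8(b): optimality under local calmness with `Y^ν ⊂ Y`, Lipschitz
conditions, and sufficiently fast convergence `θ^ν λ̄^ν sup_{y∈Y} dist₂(y,Y^ν) → 0`. -/
theorem Pnu_cluster_optimal_of_localCalm_sub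
    [NormedSpace ℝ Q] [FiniteDimensional ℝ Q]
    (X : Set (Rn n)) (Y : Set (Rn m)) (D : Set Q) (Yν : ℕ → Set (Rn m))
    (f : Rn n × Rn m → EReal) (fν : ℕ → Rn n × Rn m → EReal)
    (g : Rn n × Rn m → ℝ) (gν : ℕ → Rn n × Rn m → ℝ)
    (H : Rn n × Rn m → Q) (Hν : ℕ → Rn n × Rn m → Q)
    (σ θ lamBar τν δ η : ℕ → ℝ) (τ : ℝ) (hτ : 0 ≤ τ)
    (ba : BasicAssumption X Y D Yν f fν g gν H Hν σ θ lamBar τν δ η)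
    (hσ : Tendsto σ atTop atTop) (hθ : Tendsto θ atTop atTop)
    (ε : ℕ → ℝ) (hε0 : ∀ ν, 0 ≤ ε ν) (hεlim : Tendsto ε atTop (𝓝 0))
    (hrate : Tendsto (fun ν => θ ν * |τν ν - τ|) atTop (𝓝 0))
    (xstar : Rn n) (ystar : Rn m)
    (hopt : POpt X Y D f g H τ xstar ystar)
    (hcalm : CalmAt Y D g H xstar)
    (xs : ℕ → Rn n) (ys : ℕ → Rn m) (us : ℕ → Q) (αs lams : ℕ → ℝ)
    (hsol : ∀ ν, PnuEps X Y D (Yν ν) (fν ν) (gν ν) (Hν ν)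
      (σ ν) (θ ν) (lamBar ν) (τν ν) (ε ν) (xs ν) (ys ν) (us ν) (αs ν) (lams ν))
    (φ : ℕ → ℕ) (hφ : StrictMono φ)
    (hatx : Rn n) (haty : Rn m) (hatu : Q) (hatα : ℝ)
    (hcx : Tendsto (fun k => xs (φ k)) atTop (𝓝 hatx))
    (hcy : Tendsto (fun k => ys (φ k)) atTop (𝓝 haty))
    (hcu : Tendsto (fun k => us (φ k)) atTop (𝓝 hatu))
    (hcα : Tendsto (fun k => αs (φ k)) atTop (𝓝 hatα))
    (hloc : LocallyCalmAt Y D g H hatx)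
    -- θ^ν λ̄^ν sup_{y ∈ Y} dist₂(y, Y^ν) → 0
    (s : ℕ → ℝ) (hs : ∀ ν, ∀ y ∈ Y, infDist y (Yν ν) ≤ s ν)
    (hslim : Tendsto (fun ν => θ ν * lamBar ν * s ν) atTop (𝓝 0))
    -- Lipschitz constants
    (κg κH : ℝ) (hκg : 0 ≤ κg) (hκH : 0 ≤ κH)
    (hgLip : ∀ x ∈ X, ∀ y ∈ Y, ∀ y' ∈ Y, |g (x, y) - g (x, y')| ≤ κg * ‖y - y'‖)
    (hHLip : ∀ x ∈ X, ∀ y ∈ Y, ∀ y' ∈ Y, ‖H (x, y) - H (x, y')‖ ≤ κH * ‖y - y'‖) :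
    POpt X Y D f g H τ hatx haty ∧
    ∃ r : ℝ, PVal X Y D f g H τ = (r : EReal) ∧
      Tendsto (fun k =>
        PnuVal X Y D (Yν (φ k)) (fν (φ k)) (gν (φ k)) (Hν (φ k))
          (σ (φ k)) (θ (φ k)) (lamBar (φ k)) (τν (φ k))) atTop
        (𝓝 ((r : EReal))) := by
  obtain ⟨hfeasS, hfneS, hfvalS⟩ := hopt
  obtain ⟨hxS, hyS, hHS, hargS⟩ := hfeasS
  obtain ⟨lamS, hlamS0, hcalmS⟩ := hcalm
  have hfnbS := ba.f_ne_bot (xstar, ystar)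
  set r : ℝ := (f (xstar, ystar)).toReal with hrdef
  have hr : f (xstar, ystar) = (r : EReal) := (EReal.coe_toReal hfneS hfnbS).symm
  have hδ0 : ∀ ν, 0 ≤ δ ν := fun ν =>
    (abs_nonneg _).trans (ba.g_err ν xstar hxS ystar hyS)
  have hη0 : ∀ ν, 0 ≤ η ν := fun ν =>
    (abs_nonneg _).trans (ba.H_err ν xstar hxS ystar hyS)
  -- the base inequality from calmness at xstar
  have hbase : ∀ z ∈ Y,
      g (xstar, ystar) ≤ g (xstar, z) + lamS * infDist (H (xstar, z)) D + τ := by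
    intro z hz
    obtain ⟨u, huD, hunorm⟩ :=
      exists_add_mem_infDist ba.D_closed ba.D_nonempty (H (xstar, z))
    have h1 : ((g (xstar, ystar) - τ : ℝ) : EReal) ≤ Vfun Y D g H xstar 0 := by
      refine le_Vfun fun w hw hHw => ?_
      rw [add_zero] at hHw
      exact EReal.coe_le_coe_iff.2 (by linarith [hargS w hw hHw])
    have h2 := calm_add hcalmS u
    have h3 : Vfun Y D g H xstar u ≤ (g (xstar, z) : EReal) := Vfun_le hz huD
    have h4 : ((g (xstar, ystar) - τ : ℝ) : EReal) ≤
        ((g (xstar, z) + lamS * ‖u‖ : ℝ) : EReal) := by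
      rw [EReal.coe_add]
      exact h1.trans (h2.trans (add_le_add_left h3 _))
    rw [hunorm] at h4
    linarith [EReal.coe_le_coe_iff.1 h4]
  -- the vanishing error term q
  set q : ℕ → ℝ := fun ν =>
    σ ν * η ν + θ ν * (2 * δ ν + lamS * η ν + |τν ν - τ|) with hqdef
  have hq0 : ∀ ν, 0 ≤ q ν := by
    intro ν
    have := ba.σ_nonneg ν; have := ba.θ_nonneg ν; have := hδ0 ν; have := hη0 ν
    have := abs_nonneg (τν ν - τ)
    have h1 : (0:ℝ) ≤ σ ν * η ν := by positivity
    have h2 : (0:ℝ) ≤ θ ν * (2 * δ ν + lamS * η ν + |τν ν - τ|) := by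
      apply mul_nonneg (ba.θ_nonneg ν)
      have : (0:ℝ) ≤ lamS * η ν := mul_nonneg hlamS0 (hη0 ν)
      linarith
    simp only [hqdef]; linarith
  have hlamBarS : ∀ᶠ ν in atTop, lamS ≤ lamBar ν := ba.lamBar_top.eventually_ge_atTop lamS
  have hthlS : Tendsto (fun ν => θ ν * (lamS * η ν)) atTop (𝓝 0) := by
    apply squeeze_zero' (g := fun ν => θ ν * lamBar ν * η ν)
    · exact Eventually.of_forall fun ν =>
        mul_nonneg (ba.θ_nonneg ν) (mul_nonneg hlamS0 (hη0 ν))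
    · filter_upwards [hlamBarS] with ν hlam
      have h1 : lamS * η ν ≤ lamBar ν * η ν :=
        mul_le_mul_of_nonneg_right hlam (hη0 ν)
      have := mul_le_mul_of_nonneg_left h1 (ba.θ_nonneg ν)
      calc θ ν * (lamS * η ν) ≤ θ ν * (lamBar ν * η ν) := this
        _ = θ ν * lamBar ν * η ν := by ring
    · exact ba.θlamη_lim
  have hqlim : Tendsto q atTop (𝓝 0) := by
    have h2δ : Tendsto (fun ν => θ ν * (2 * δ ν)) atTop (𝓝 0) := by
      have := ba.θδ_lim.const_mul (2:ℝ)
      simp only [mul_zero] at this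
      exact this.congr fun ν => by ring
    have h1 : Tendsto (fun ν => σ ν * η ν +
        (θ ν * (2 * δ ν) + (θ ν * (lamS * η ν) + θ ν * |τν ν - τ|)))
        atTop (𝓝 0) := by
      simpa using ba.ση_lim.add (h2δ.add (hthlS.add hrate))
    exact h1.congr fun ν => by simp only [hqdef]; ring
  -- E1 : eventual upper bound on the approximate values
  have hE1 : ∀ᶠ ν in atTop,
      PnuVal X Y D (Yν ν) (fν ν) (gν ν) (Hν ν) (σ ν) (θ ν) (lamBar ν) (τν ν) ≤
        fν ν (xstar, ystar) + (q ν : EReal) := by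
    filter_upwards [hlamBarS] with ν hlam
    obtain ⟨u, huD, hunorm⟩ :=
      exists_add_mem_infDist ba.D_closed ba.D_nonempty (Hν ν (xstar, ystar))
    have h0 : infDist (H (xstar, ystar)) D = 0 :=
      (ba.D_closed.mem_iff_infDist_zero ba.D_nonempty).1 hHS
    have hu_le : ‖u‖ ≤ η ν := by
      have h := abs_le.1 (ba.H_err ν xstar hxS ystar hyS)
      rw [hunorm]; linarith [h.2]
    set A : ℝ := 2 * δ ν + lamS * η ν + |τν ν - τ| with hA
    have hA0 : 0 ≤ A := by
      have : (0:ℝ) ≤ lamS * η ν := mul_nonneg hlamS0 (hη0 ν)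
      have := abs_nonneg (τν ν - τ); have := hδ0 ν
      simp only [hA]; linarith
    have hfeasC : PnuFeas X Y D (Yν ν) (gν ν) (Hν ν) (lamBar ν) (τν ν)
        xstar ystar u (-A) lamS := by
      refine ⟨hxS, hyS, by linarith, hlamS0, hlam, huD, ?_⟩
      intro z hzYν
      have hzY := ba.Yν_subset ν hzYν
      have h1 := abs_le.1 (ba.g_err ν xstar hxS ystar hyS)
      have h2 := abs_le.1 (ba.g_err ν xstar hxS z hzY)
      have h3 := abs_le.1 (ba.H_err ν xstar hxS z hzY)
      have h4 := hbase z hzY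
      have h5 : τ - τν ν ≤ |τν ν - τ| := by
        rw [abs_sub_comm]; exact le_abs_self _
      have h6 : infDist (H (xstar, z)) D ≤ infDist (Hν ν (xstar, z)) D + η ν := by
        linarith [h3.2]
      have h7 := mul_le_mul_of_nonneg_left h6 hlamS0
      simp only [hA]
      nlinarith [h1.1, h1.2, h2.1, h2.2]
    refine (PnuVal_le_PnuObj hfeasC).trans ?_
    unfold PnuObj
    apply add_le_add_right
    apply EReal.coe_le_coe_iff.2
    have h8 : σ ν * ‖u‖ ≤ σ ν * η ν := mul_le_mul_of_nonneg_left hu_le (ba.σ_nonneg ν)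
    have h9 : θ ν * (-A) = -(θ ν * A) := by ring
    simp only [hqdef]
    rw [← hA]
    linarith
  -- data from the epsilon-optimal solutions
  have hxk : ∀ ν, xs ν ∈ X := fun ν => (hsol ν).1.1
  have hyk : ∀ ν, ys ν ∈ Y := fun ν => (hsol ν).1.2.1
  have hαk : ∀ ν, αs ν ≤ 0 := fun ν => (hsol ν).1.2.2.1
  have hlamk0 : ∀ ν, 0 ≤ lams ν := fun ν => (hsol ν).1.2.2.2.1
  have hlamkle : ∀ ν, lams ν ≤ lamBar ν := fun ν => (hsol ν).1.2.2.2.2.1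
  have hHuk : ∀ ν, Hν ν (xs ν, ys ν) + us ν ∈ D := fun ν => (hsol ν).1.2.2.2.2.2.1
  have hconsk : ∀ ν, ∀ z ∈ Yν ν, gν ν (xs ν, ys ν) + αs ν ≤
      gν ν (xs ν, z) + lams ν * infDist (Hν ν (xs ν, z)) D + τν ν :=
    fun ν => (hsol ν).1.2.2.2.2.2.2
  have hφtop : Tendsto φ atTop atTop := hφ.tendsto_atTop
  have hxhat : hatx ∈ X :=
    ba.X_closed.mem_of_tendsto hcx (Eventually.of_forall fun k => hxk _)
  have hyhat : haty ∈ Y :=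
    ba.Y_closed.mem_of_tendsto hcy (Eventually.of_forall fun k => hyk _)
  -- liminf along the subsequence
  have hsub_liminf : f (hatx, haty) ≤
      liminf (fun k => fν (φ k) (xs (φ k), ys (φ k))) atTop := by
    set xs' : ℕ → Rn n := fun ν => if ν ∈ Set.range φ then xs ν else hatx with hxs'
    set ys' : ℕ → Rn m := fun ν => if ν ∈ Set.range φ then ys ν else haty with hys'
    have hxs'X : ∀ ν, xs' ν ∈ X := fun ν => by
      by_cases h : ν ∈ Set.range φ
      · simpa only [hxs', if_pos h] using hxk ν
      · simpa only [hxs', if_neg h] using hxhat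
    have hys'Y : ∀ ν, ys' ν ∈ Y := fun ν => by
      by_cases h : ν ∈ Set.range φ
      · simpa only [hys', if_pos h] using hyk ν
      · simpa only [hys', if_neg h] using hyhat
    have hcx' : Tendsto xs' atTop (𝓝 hatx) := patch_tendsto hφ xs hatx hcx
    have hcy' : Tendsto ys' atTop (𝓝 haty) := patch_tendsto hφ ys haty hcy
    have h1 := ba.f_liminf hatx hxhat haty hyhat xs' ys' hxs'X hys'Y hcx' hcy'
    refine h1.trans ?_
    have h2 : liminf (fun ν => fν ν (xs' ν, ys' ν)) atTop ≤
        liminf ((fun ν => fν ν (xs' ν, ys' ν)) ∘ φ) atTop := by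
      rw [liminf_comp]
      exact liminf_le_liminf_of_le hφtop
    refine h2.trans_eq (liminf_congr ?_)
    refine Eventually.of_forall fun k => ?_
    simp only [Function.comp_apply, hxs', hys', if_pos (Set.mem_range_self k)]
  -- E2 : eventual upper bound on fν at (xstar, ystar)
  have hE2 : ∀ c : ℝ, r < c → ∀ᶠ ν in atTop, fν ν (xstar, ystar) < (c : EReal) := by
    intro c hc
    refine eventually_lt_of_limsup_lt ?_
    calc limsup (fun ν => fν ν (xstar, ystar)) atTop ≤ f (xstar, ystar) :=
          ba.f_limsup xstar hxS ystar hyS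
      _ = (r : EReal) := hr
      _ < (c : EReal) := EReal.coe_lt_coe_iff.2 hc
  -- eventual upper bound on the approximate minimum values
  have hMle : ∀ c : ℝ, r < c → ∀ᶠ ν in atTop,
      PnuVal X Y D (Yν ν) (fν ν) (gν ν) (Hν ν) (σ ν) (θ ν) (lamBar ν) (τν ν) ≤
        (c : EReal) := by
    intro c hc
    have hmid : r < (r + c) / 2 := by linarith
    filter_upwards [hE1, hE2 ((r + c) / 2) hmid,
      hqlim.eventually_lt_const (show (0:ℝ) < (c - r) / 2 by linarith)] with ν h1 h2 h3
    refine h1.trans ?_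
    calc fν ν (xstar, ystar) + (q ν : EReal) ≤
          (((r + c) / 2 : ℝ) : EReal) + ((q ν : ℝ) : EReal) := add_le_add_left h2.le _
      _ = (((r + c) / 2 + q ν : ℝ) : EReal) := by simp only [hqdef, EReal.coe_add]
      _ ≤ (c : EReal) := EReal.coe_le_coe_iff.2 (by linarith)
  -- penalty terms are nonnegative
  have hpen0 : ∀ ν, (0:ℝ) ≤ σ ν * ‖us ν‖ - θ ν * αs ν := by
    intro ν
    have h1 : (0:ℝ) ≤ σ ν * ‖us ν‖ := mul_nonneg (ba.σ_nonneg ν) (norm_nonneg _)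
    have h2 : θ ν * αs ν ≤ 0 := mul_nonpos_of_nonneg_of_nonpos (ba.θ_nonneg ν) (hαk ν)
    linarith
  have hobj_ge_f : ∀ ν, fν ν (xs ν, ys ν) ≤
      PnuObj (fν ν) (σ ν) (θ ν) (xs ν) (ys ν) (us ν) (αs ν) := by
    intro ν
    unfold PnuObj
    nth_rewrite 1 [← add_zero (fν ν (xs ν, ys ν))]
    refine add_le_add_right ?_ _
    exact_mod_cast EReal.coe_le_coe_iff.2 (hpen0 ν)
  -- a real lower bound c₀ for f near (hatx, haty)
  obtain ⟨c₀, -, hc₀⟩ := EReal.lt_iff_exists_real_btwn.1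
    ((ba.f_ne_bot (hatx, haty)).bot_lt)
  have hEc₀ : ∀ᶠ k in atTop, (c₀ : EReal) < fν (φ k) (xs (φ k), ys (φ k)) :=
    eventually_lt_of_lt_liminf (lt_of_lt_of_le hc₀ hsub_liminf)
  -- bound on the penalty term along the subsequence
  set C : ℝ := (r + 2) - c₀ with hCdef
  have hpenC : ∀ᶠ k in atTop,
      σ (φ k) * ‖us (φ k)‖ - θ (φ k) * αs (φ k) ≤ C := by
    filter_upwards [hEc₀, hφtop.eventually (hMle (r + 1) (by linarith)),
      hφtop.eventually (hεlim.eventually_lt_const one_pos)] with k h1 h2 h3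
    have hobj := (hsol (φ k)).2.2
    have h4 : PnuObj (fν (φ k)) (σ (φ k)) (θ (φ k)) (xs (φ k)) (ys (φ k))
        (us (φ k)) (αs (φ k)) ≤ ((r + 2 : ℝ) : EReal) := by
      refine hobj.trans ?_
      calc PnuVal X Y D (Yν (φ k)) (fν (φ k)) (gν (φ k)) (Hν (φ k)) (σ (φ k))
            (θ (φ k)) (lamBar (φ k)) (τν (φ k)) + (ε (φ k) : EReal) ≤
            ((r + 1 : ℝ) : EReal) + ((ε (φ k) : ℝ) : EReal) := add_le_add_left h2 _
        _ = ((r + 1 + ε (φ k) : ℝ) : EReal) := by push_cast; ring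
        _ ≤ ((r + 2 : ℝ) : EReal) := EReal.coe_le_coe_iff.2 (by linarith)
    have h5 : ((c₀ + (σ (φ k) * ‖us (φ k)‖ - θ (φ k) * αs (φ k)) : ℝ) : EReal) ≤
        ((r + 2 : ℝ) : EReal) := by
      rw [EReal.coe_add]
      refine le_trans ?_ h4
      unfold PnuObj
      exact add_le_add_left h1.le _
    have := EReal.coe_le_coe_iff.1 h5
    simp only [hCdef]; linarith
  -- the multiplier and slack sequences vanish along the subsequence
  have hσφ : Tendsto (fun k => σ (φ k)) atTop atTop := hσ.comp hφtop
  have hθφ : Tendsto (fun k => θ (φ k)) atTop atTop := hθ.comp hφtop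
  have hu0 : Tendsto (fun k => ‖us (φ k)‖) atTop (𝓝 0) := by
    refine squeeze_zero' (g := fun k => C / σ (φ k))
      (Eventually.of_forall fun k => norm_nonneg _) ?_
      (tendsto_const_nhds.div_atTop hσφ)
    filter_upwards [hpenC, hσφ.eventually_gt_atTop 0] with k h1 h2
    rw [le_div_iff₀ h2]
    have h3 : θ (φ k) * αs (φ k) ≤ 0 :=
      mul_nonpos_of_nonneg_of_nonpos (ba.θ_nonneg _) (hαk _)
    calc ‖us (φ k)‖ * σ (φ k) = σ (φ k) * ‖us (φ k)‖ := by ring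
      _ ≤ C := by linarith
  have hα0 : Tendsto (fun k => αs (φ k)) atTop (𝓝 0) := by
    have hneg : Tendsto (fun k => -αs (φ k)) atTop (𝓝 0) := by
      refine squeeze_zero' (g := fun k => C / θ (φ k))
        (Eventually.of_forall fun k => by linarith [hαk (φ k)]) ?_
        (tendsto_const_nhds.div_atTop hθφ)
      filter_upwards [hpenC, hθφ.eventually_gt_atTop 0] with k h1 h2
      rw [le_div_iff₀ h2]
      have h3 : (0:ℝ) ≤ σ (φ k) * ‖us (φ k)‖ := mul_nonneg (ba.σ_nonneg _) (norm_nonneg _)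
      calc -αs (φ k) * θ (φ k) = -(θ (φ k) * αs (φ k)) := by ring
        _ ≤ C := by linarith
    simpa using hneg.neg
  have hηφ : Tendsto (fun k => η (φ k)) atTop (𝓝 0) := ba.η_lim.comp hφtop
  -- H (hatx, haty) ∈ D
  have hpair : Tendsto (fun k => (xs (φ k), ys (φ k))) atTop (𝓝[X ×ˢ Y] (hatx, haty)) := by
    rw [tendsto_nhdsWithin_iff]
    exact ⟨hcx.prodMk_nhds hcy, Eventually.of_forall fun k => ⟨hxk _, hyk _⟩⟩
  have hHk : Tendsto (fun k => infDist (H (xs (φ k), ys (φ k))) D) atTop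
      (𝓝 (infDist (H (hatx, haty)) D)) :=
    ((continuous_infDist_pt D).continuousAt.tendsto).comp
      (Tendsto.comp (ba.H_cont (hatx, haty) ⟨hxhat, hyhat⟩) hpair)
  have hHhat : H (hatx, haty) ∈ D := by
    have hle : infDist (H (hatx, haty)) D ≤ 0 := by
      refine le_of_tendsto_of_tendsto hHk (by simpa using hu0.add hηφ) ?_
      refine Eventually.of_forall fun k => ?_
      show infDist (H (xs (φ k), ys (φ k))) D ≤ ‖us (φ k)‖ + η (φ k)
      have h1 : infDist (Hν (φ k) (xs (φ k), ys (φ k))) D ≤ ‖us (φ k)‖ := by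
        have h0 : infDist (Hν (φ k) (xs (φ k), ys (φ k))) D ≤
            dist (Hν (φ k) (xs (φ k), ys (φ k)))
              (Hν (φ k) (xs (φ k), ys (φ k)) + us (φ k)) :=
          infDist_le_dist_of_mem (hHuk (φ k))
        calc infDist (Hν (φ k) (xs (φ k), ys (φ k))) D ≤
            dist (Hν (φ k) (xs (φ k), ys (φ k))) (Hν (φ k) (xs (φ k), ys (φ k)) + us (φ k)) := h0
          _ = ‖us (φ k)‖ := by rw [dist_eq_norm]; simp
      have h2 := abs_le.1 (ba.H_err (φ k) (xs (φ k)) (hxk _) (ys (φ k)) (hyk _))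
      linarith [h2.1]
    exact (ba.D_closed.mem_iff_infDist_zero ba.D_nonempty).2
      (le_antisymm hle infDist_nonneg)
  -- auxiliary vanishing sequences
  have hs0 : ∀ ν, 0 ≤ s ν := by
    intro ν
    obtain ⟨y0, hy0⟩ := ba.Y_nonempty
    exact le_trans infDist_nonneg (hs ν y0 hy0)
  have hθ1 : ∀ᶠ ν in atTop, (1:ℝ) ≤ θ ν := hθ.eventually_ge_atTop 1
  have hthL1 : ∀ᶠ ν in atTop, (1:ℝ) ≤ θ ν * lamBar ν := by
    filter_upwards [hθ1, ba.lamBar_top.eventually_ge_atTop 1] with ν h1 h2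
    nlinarith
  have hsν0 : Tendsto s atTop (𝓝 0) := by
    refine squeeze_zero' (Eventually.of_forall hs0) ?_ hslim
    filter_upwards [hthL1] with ν h1
    nlinarith [hs0 ν]
  have hLs : Tendsto (fun ν => lamBar ν * s ν) atTop (𝓝 0) := by
    refine squeeze_zero'
      (Eventually.of_forall fun ν => mul_nonneg (ba.lamBar_nonneg ν) (hs0 ν)) ?_ hslim
    filter_upwards [hθ1] with ν h1
    nlinarith [mul_nonneg (ba.lamBar_nonneg ν) (hs0 ν)]
  have hLeta : Tendsto (fun ν => lamBar ν * η ν) atTop (𝓝 0) := by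
    refine squeeze_zero'
      (Eventually.of_forall fun ν => mul_nonneg (ba.lamBar_nonneg ν) (hη0 ν)) ?_
      ba.θlamη_lim
    filter_upwards [hθ1] with ν h1
    nlinarith [mul_nonneg (ba.lamBar_nonneg ν) (hη0 ν)]
  have hτν : Tendsto τν atTop (𝓝 τ) := by
    rw [tendsto_iff_dist_tendsto_zero]
    refine squeeze_zero' (Eventually.of_forall fun ν => dist_nonneg) ?_ hrate
    filter_upwards [hθ1] with ν h1
    rw [Real.dist_eq]
    nlinarith [abs_nonneg (τν ν - τ)]
  have hsφ : Tendsto (fun k => s (φ k)) atTop (𝓝 0) := hsν0.comp hφtop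
  have hLsphi : Tendsto (fun k => lamBar (φ k) * s (φ k)) atTop (𝓝 0) := hLs.comp hφtop
  have hLetaphi : Tendsto (fun k => lamBar (φ k) * η (φ k)) atTop (𝓝 0) := hLeta.comp hφtop
  have hτνφ : Tendsto (fun k => τν (φ k)) atTop (𝓝 τ) := hτν.comp hφtop
  have hδφ : Tendsto (fun k => δ (φ k)) atTop (𝓝 0) := ba.δ_lim.comp hφtop
  -- convergence of the approximate objective values at the solutions
  have hgk : Tendsto (fun k => gν (φ k) (xs (φ k), ys (φ k))) atTop
      (𝓝 (g (hatx, haty))) := by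
    have hgc : Tendsto (fun k => g (xs (φ k), ys (φ k))) atTop (𝓝 (g (hatx, haty))) :=
      Tendsto.comp (ba.g_cont (hatx, haty) ⟨hxhat, hyhat⟩) hpair
    have hdiff : Tendsto
        (fun k => gν (φ k) (xs (φ k), ys (φ k)) - g (xs (φ k), ys (φ k))) atTop (𝓝 0) := by
      refine squeeze_zero_norm (fun k => ?_) hδφ
      exact ba.g_err (φ k) (xs (φ k)) (hxk _) (ys (φ k)) (hyk _)
    have := hgc.add hdiff
    rw [add_zero] at this
    exact this.congr fun k => by ring
  -- the β sequence used for near-projections onto Yν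
  set β : ℕ → ℝ := fun k => 1 / ((k + 1 : ℝ) * (lamBar (φ k) + 1)) with hβdef
  have hLpos : ∀ k, (0:ℝ) < lamBar (φ k) + 1 := fun k => by
    linarith [ba.lamBar_nonneg (φ k)]
  have hk1pos : ∀ k : ℕ, (0:ℝ) < (k + 1 : ℝ) := fun k => by positivity
  have hβpos : ∀ k, 0 < β k := fun k => by
    simp only [hβdef]
    exact div_pos one_pos (mul_pos (hk1pos k) (hLpos k))
  have hβle : ∀ k, β k ≤ 1 / (k + 1 : ℝ) := by
    intro k
    simp only [hβdef]
    rw [div_le_div_iff₀ (mul_pos (hk1pos k) (hLpos k)) (hk1pos k)]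
    nlinarith [ba.lamBar_nonneg (φ k), hk1pos k]
  have hone_div : Tendsto (fun k : ℕ => 1 / ((k : ℝ) + 1)) atTop (𝓝 0) :=
    tendsto_one_div_add_atTop_nhds_zero_nat
  have hβ0 : Tendsto β atTop (𝓝 0) :=
    squeeze_zero' (Eventually.of_forall fun k => (hβpos k).le)
      (Eventually.of_forall hβle) hone_div
  have hLbeta : Tendsto (fun k => lamBar (φ k) * β k) atTop (𝓝 0) := by
    refine squeeze_zero'
      (Eventually.of_forall fun k => mul_nonneg (ba.lamBar_nonneg _) (hβpos k).le)
      (Eventually.of_forall fun k => ?_) hone_div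
    simp only [hβdef, mul_one_div]
    rw [div_le_div_iff₀ (mul_pos (hk1pos k) (hLpos k)) (hk1pos k)]
    nlinarith [ba.lamBar_nonneg (φ k), hk1pos k]
  -- local calmness data
  obtain ⟨lamL, ρ, hlamL0, hρ0, hlocal⟩ := hloc
  have hxball : ∀ᶠ k in atTop, xs (φ k) ∈ Metric.closedBall hatx ρ :=
    hcx.eventually (Metric.closedBall_mem_nhds hatx hρ0)
  -- the argmin property of haty
  have hargmin : ∀ z ∈ Y, H (hatx, z) ∈ D → g (hatx, haty) ≤ g (hatx, z) + τ := by
    intro z hz hHz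
    refine le_of_forall_pos_le_add fun t ht => ?_
    -- the key eventual inequality
    have hkey : ∀ᶠ k in atTop,
        gν (φ k) (xs (φ k), ys (φ k)) + αs (φ k) ≤
          g (xs (φ k), z) + lamL * infDist (H (xs (φ k), z)) D + t +
            (κg * (s (φ k) + β k) + δ (φ k) +
              lamBar (φ k) * (κH * (s (φ k) + β k) + η (φ k))) + τν (φ k) := by
      filter_upwards [hxball] with k hball
      set x_ : Rn n := xs (φ k) with hxdef
      have hxX : x_ ∈ X := hxk (φ k)
      -- exact penalty bound via local calmness
      obtain ⟨u, huD, hunorm⟩ :=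
        exists_add_mem_infDist ba.D_closed ba.D_nonempty (H (x_, z))
      have hV1 : Vfun Y D g H x_ 0 ≤
          ((g (x_, z) + lamL * infDist (H (x_, z)) D : ℝ) : EReal) := by
        have h1 := ereal_le_add_coe_of_sub (hlocal x_ hball u)
        have h2 : Vfun Y D g H x_ u ≤ (g (x_, z) : EReal) := Vfun_le hz huD
        calc Vfun Y D g H x_ 0 ≤ Vfun Y D g H x_ u + ((lamL * ‖u‖ : ℝ) : EReal) := h1
          _ ≤ (g (x_, z) : EReal) + ((lamL * ‖u‖ : ℝ) : EReal) := add_le_add_left h2 _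
          _ = ((g (x_, z) + lamL * ‖u‖ : ℝ) : EReal) := by rw [EReal.coe_add]
          _ = ((g (x_, z) + lamL * infDist (H (x_, z)) D : ℝ) : EReal) := by rw [hunorm]
      -- a nearly optimal point of the lower-level problem at x_
      have hV2 : Vfun Y D g H x_ 0 <
          ((g (x_, z) + lamL * infDist (H (x_, z)) D + t : ℝ) : EReal) :=
        lt_of_le_of_lt hV1 (EReal.coe_lt_coe_iff.2 (by linarith))
      obtain ⟨z', hz'Y, hz'H, hz'g⟩ := exists_of_Vfun_lt hV2
      rw [add_zero] at hz'H
      have hz'H0 : infDist (H (x_, z')) D = 0 :=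
        (ba.D_closed.mem_iff_infDist_zero ba.D_nonempty).1 hz'H
      -- a nearby point of Yν
      have hinfz' : infDist z' (Yν (φ k)) < infDist z' (Yν (φ k)) + β k :=
        lt_add_of_pos_right _ (hβpos k)
      obtain ⟨w, hwYν, hwdist⟩ := (infDist_lt_iff (ba.Yν_nonempty (φ k))).1 hinfz'
      have hwY : w ∈ Y := ba.Yν_subset _ hwYν
      have hwz' : ‖w - z'‖ ≤ s (φ k) + β k := by
        have h1 : dist z' w ≤ s (φ k) + β k :=
          le_trans hwdist.le (by linarith [hs (φ k) z' hz'Y])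
        rw [dist_eq_norm] at h1
        rw [← norm_neg]
        simpa [neg_sub] using h1
      -- the lower-level constraint at w
      have hcons := hconsk (φ k) w hwYν
      -- error bounds
      have hgw := abs_le.1 (ba.g_err (φ k) x_ hxX w hwY)
      have hgLw := abs_le.1 (hgLip x_ hxX w hwY z' hz'Y)
      have hHw := abs_le.1 (ba.H_err (φ k) x_ hxX w hwY)
      have hHLw := hHLip x_ hxX w hwY z' hz'Y
      have hdHw : infDist (H (x_, w)) D ≤ κH * (s (φ k) + β k) := by
        have h1 : infDist (H (x_, w)) D ≤
            infDist (H (x_, z')) D + dist (H (x_, w)) (H (x_, z')) :=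
          infDist_le_infDist_add_dist
        rw [hz'H0, zero_add, dist_eq_norm] at h1
        have h2 : ‖H (x_, w) - H (x_, z')‖ ≤ κH * (s (φ k) + β k) :=
          le_trans hHLw (mul_le_mul_of_nonneg_left hwz' hκH)
        linarith
      have hdHνw : infDist (Hν (φ k) (x_, w)) D ≤ κH * (s (φ k) + β k) + η (φ k) := by
        linarith [hHw.2]
      have hlam_term : lams (φ k) * infDist (Hν (φ k) (x_, w)) D ≤
          lamBar (φ k) * (κH * (s (φ k) + β k) + η (φ k)) := by
        have h1 : lams (φ k) * infDist (Hν (φ k) (x_, w)) D ≤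
            lamBar (φ k) * infDist (Hν (φ k) (x_, w)) D :=
          mul_le_mul_of_nonneg_right (hlamkle _) infDist_nonneg
        have h2 : lamBar (φ k) * infDist (Hν (φ k) (x_, w)) D ≤
            lamBar (φ k) * (κH * (s (φ k) + β k) + η (φ k)) :=
          mul_le_mul_of_nonneg_left hdHνw (ba.lamBar_nonneg _)
        linarith
      have hgνw : gν (φ k) (x_, w) ≤
          g (x_, z) + lamL * infDist (H (x_, z)) D + t + κg * (s (φ k) + β k) + δ (φ k) := by
        have h1 : g (x_, w) ≤ g (x_, z') + κg * (s (φ k) + β k) := by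
          have := mul_le_mul_of_nonneg_left hwz' hκg
          have h2 : g (x_, w) - g (x_, z') ≤ κg * ‖w - z'‖ := hgLw.2
          linarith
        linarith [hgw.2, hz'g]
      calc gν (φ k) (xs (φ k), ys (φ k)) + αs (φ k) ≤
          gν (φ k) (x_, w) + lams (φ k) * infDist (Hν (φ k) (x_, w)) D + τν (φ k) := hcons
        _ ≤ g (x_, z) + lamL * infDist (H (x_, z)) D + t +
            (κg * (s (φ k) + β k) + δ (φ k) +
              lamBar (φ k) * (κH * (s (φ k) + β k) + η (φ k))) + τν (φ k) := by
          linarith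
    -- pass to the limit
    have hLHS : Tendsto (fun k => gν (φ k) (xs (φ k), ys (φ k)) + αs (φ k)) atTop
        (𝓝 (g (hatx, haty))) := by
      have := hgk.add hα0
      rwa [add_zero] at this
    have hgzc : Tendsto (fun k => g (xs (φ k), z)) atTop (𝓝 (g (hatx, z))) := by
      have hpair2 : Tendsto (fun k => (xs (φ k), z)) atTop (𝓝[X ×ˢ Y] (hatx, z)) := by
        rw [tendsto_nhdsWithin_iff]
        exact ⟨hcx.prodMk_nhds tendsto_const_nhds,
          Eventually.of_forall fun k => ⟨hxk _, hz⟩⟩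
      exact Tendsto.comp (ba.g_cont (hatx, z) ⟨hxhat, hz⟩) hpair2
    have hdHz : Tendsto (fun k => infDist (H (xs (φ k), z)) D) atTop (𝓝 0) := by
      have hpair2 : Tendsto (fun k => (xs (φ k), z)) atTop (𝓝[X ×ˢ Y] (hatx, z)) := by
        rw [tendsto_nhdsWithin_iff]
        exact ⟨hcx.prodMk_nhds tendsto_const_nhds,
          Eventually.of_forall fun k => ⟨hxk _, hz⟩⟩
      have h1 : Tendsto (fun k => infDist (H (xs (φ k), z)) D) atTop
          (𝓝 (infDist (H (hatx, z)) D)) :=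
        ((continuous_infDist_pt D).continuousAt.tendsto).comp
          (Tendsto.comp (ba.H_cont (hatx, z) ⟨hxhat, hz⟩) hpair2)
      rwa [(ba.D_closed.mem_iff_infDist_zero ba.D_nonempty).1 hHz] at h1
    have hRHS : Tendsto (fun k =>
        g (xs (φ k), z) + lamL * infDist (H (xs (φ k), z)) D + t +
          (κg * (s (φ k) + β k) + δ (φ k) +
            lamBar (φ k) * (κH * (s (φ k) + β k) + η (φ k))) + τν (φ k)) atTop
        (𝓝 (g (hatx, z) + t + τ)) := by
      have h1 : Tendsto (fun k => lamL * infDist (H (xs (φ k), z)) D) atTop (𝓝 0) := by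
        have := hdHz.const_mul lamL
        rwa [mul_zero] at this
      have h2 : Tendsto (fun k => κg * (s (φ k) + β k)) atTop (𝓝 0) := by
        have := (hsφ.add hβ0).const_mul κg
        rwa [add_zero, mul_zero] at this
      have h3 : Tendsto (fun k =>
          lamBar (φ k) * (κH * (s (φ k) + β k) + η (φ k))) atTop (𝓝 0) := by
        have h4 : Tendsto (fun k =>
            κH * (lamBar (φ k) * s (φ k)) + κH * (lamBar (φ k) * β k) +
              lamBar (φ k) * η (φ k)) atTop (𝓝 0) := by
          have := ((hLsphi.const_mul κH).add (hLbeta.const_mul κH)).add hLetaphi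
          simpa using this
        exact h4.congr fun k => by ring
      have h5 : Tendsto (fun k =>
          g (xs (φ k), z) + lamL * infDist (H (xs (φ k), z)) D + t +
            (κg * (s (φ k) + β k) + δ (φ k) +
              lamBar (φ k) * (κH * (s (φ k) + β k) + η (φ k))) + τν (φ k)) atTop
          (𝓝 (g (hatx, z) + 0 + t + (0 + 0 + 0) + τ)) :=
        ((((hgzc.add h1).add tendsto_const_nhds).add ((h2.add hδφ).add h3)).add hτνφ)
      simpa using h5
    have := le_of_tendsto_of_tendsto hLHS hRHS hkey
    linarith
  -- feasibility of the cluster point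
  have hPfeas : PFeas X Y D g H τ hatx haty := ⟨hxhat, hyhat, hHhat, hargmin⟩
  -- upper bound on the objective value at the cluster point
  have hfhat_le : f (hatx, haty) ≤ (r : EReal) := by
    by_contra hcon
    push_neg at hcon
    obtain ⟨c, hc1, hc2⟩ := EReal.lt_iff_exists_real_btwn.1 hcon
    have hc1' : r < c := EReal.coe_lt_coe_iff.1 hc1
    have hev1 : ∀ᶠ k in atTop, (c : EReal) < fν (φ k) (xs (φ k), ys (φ k)) :=
      eventually_lt_of_lt_liminf (lt_of_lt_of_le hc2 hsub_liminf)
    have hev2 := hφtop.eventually (hMle ((r + c) / 2) (by linarith))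
    have hev3 : ∀ᶠ k in atTop, ε (φ k) < (c - r) / 2 :=
      hφtop.eventually (hεlim.eventually_lt_const (by linarith))
    obtain ⟨k, h1, h2, h3⟩ := (hev1.and (hev2.and hev3)).exists
    have h4 : (c : EReal) < PnuObj (fν (φ k)) (σ (φ k)) (θ (φ k)) (xs (φ k)) (ys (φ k))
        (us (φ k)) (αs (φ k)) := lt_of_lt_of_le h1 (hobj_ge_f (φ k))
    have h5 := (hsol (φ k)).2.2
    have h6 : PnuObj (fν (φ k)) (σ (φ k)) (θ (φ k)) (xs (φ k)) (ys (φ k))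
        (us (φ k)) (αs (φ k)) ≤ (c : EReal) := by
      refine h5.trans ?_
      calc PnuVal X Y D (Yν (φ k)) (fν (φ k)) (gν (φ k)) (Hν (φ k)) (σ (φ k)) (θ (φ k))
            (lamBar (φ k)) (τν (φ k)) + (ε (φ k) : EReal) ≤
            (((r + c) / 2 : ℝ) : EReal) + ((ε (φ k) : ℝ) : EReal) :=
          add_le_add h2 le_rfl
        _ = (((r + c) / 2 + ε (φ k) : ℝ) : EReal) := by rw [EReal.coe_add]
        _ ≤ (c : EReal) := EReal.coe_le_coe_iff.2 (by linarith)
    exact absurd (h4.trans_le h6) (lt_irrefl _)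
  have hr_le : (r : EReal) ≤ f (hatx, haty) := by
    calc (r : EReal) = f (xstar, ystar) := hr.symm
      _ = PVal X Y D f g H τ := hfvalS
      _ ≤ f (hatx, haty) := PVal_le hPfeas
  have hfeq : f (hatx, haty) = (r : EReal) := le_antisymm hfhat_le hr_le
  have hPvalr : PVal X Y D f g H τ = (r : EReal) := hfvalS.symm.trans hr
  refine ⟨⟨hPfeas, by rw [hfeq]; exact EReal.coe_ne_top r, hfeq.trans hPvalr.symm⟩,
    r, hPvalr, ?_⟩
  -- convergence of the approximate minimum values along the subsequence
  rw [tendsto_order]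
  constructor
  · intro a ha
    obtain ⟨c1, hac1, hc1r⟩ := EReal.lt_iff_exists_real_btwn.1 ha
    have hc1r' : c1 < r := EReal.coe_lt_coe_iff.1 hc1r
    set c2 : ℝ := (c1 + r) / 2 with hc2def
    have hev1 : ∀ᶠ k in atTop, (c2 : EReal) < fν (φ k) (xs (φ k), ys (φ k)) := by
      refine eventually_lt_of_lt_liminf (lt_of_lt_of_le ?_ hsub_liminf)
      rw [hfeq]
      exact EReal.coe_lt_coe_iff.2 (by simp only [hc2def]; linarith)
    have hev3 : ∀ᶠ k in atTop, ε (φ k) < c2 - c1 :=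
      hφtop.eventually (hεlim.eventually_lt_const (by simp only [hc2def]; linarith))
    filter_upwards [hev1, hev3] with k h1 h3
    have h4 : (c2 : EReal) < PnuObj (fν (φ k)) (σ (φ k)) (θ (φ k)) (xs (φ k)) (ys (φ k))
        (us (φ k)) (αs (φ k)) := lt_of_lt_of_le h1 (hobj_ge_f (φ k))
    have h5 := h4.trans_le ((hsol (φ k)).2.2)
    have h6 : (c2 : EReal) ≤ PnuVal X Y D (Yν (φ k)) (fν (φ k)) (gν (φ k)) (Hν (φ k))
        (σ (φ k)) (θ (φ k)) (lamBar (φ k)) (τν (φ k)) + ((c2 - c1 : ℝ) : EReal) := by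
      refine h5.le.trans (add_le_add le_rfl ?_)
      exact EReal.coe_le_coe_iff.2 h3.le
    have h7 := ereal_coe_sub_le_of_le_add h6
    have h8 : c2 - (c2 - c1) = c1 := by ring
    rw [h8] at h7
    exact lt_of_lt_of_le hac1 h7
  · intro b hb
    obtain ⟨c, hrc, hcb⟩ := EReal.lt_iff_exists_real_btwn.1 hb
    have hrc' : r < c := EReal.coe_lt_coe_iff.1 hrc
    filter_upwards [hφtop.eventually (hMle c hrc')] with k h1
    exact lt_of_le_of_lt h1 hcb
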